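/- A vector θ* ∈ ℝ^n is the unique minimizer of the ℓ1 problem (i.e., ‖φ(θ*)‖₁ < ‖φ(θ)‖₁ for all θ ≠ θ*) if and only if for every nonzero η ∈ ℝ^n, |Σ_{t ∈ I⁺(θ*)} ⟨η, x_t⟩ − Σ_{t ∈ I⁻(θ*)} ⟨η, x_t⟩| < Σ_{t ∈ I⁰(θ*)} |⟨η, x_t⟩|. -/

import Mathlib

open Matrix Finset

private lemma pt_ineq (φ d : ℝ) :
    |φ| + (if φ = 0 then |d| else if φ < 0 then d else -d) ≤ |φ - d| := by
  rcases lt_trichotomy φ 0 with h | h | h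
  · rw [if_neg h.ne, if_pos h, abs_of_neg h]
    have := neg_le_abs (φ - d)
    linarith
  · simp [h]
  · rw [if_neg h.ne', if_neg (not_lt.mpr h.le), abs_of_pos h]
    have := le_abs_self (φ - d)
    linarith

private lemma pt_eq (φ d : ℝ) (h : φ ≠ 0 → |d| ≤ |φ|) :
    |φ - d| = |φ| + (if φ = 0 then |d| else if φ < 0 then d else -d) := by
  rcases lt_trichotomy φ 0 with hφ | hφ | hφ
  · rw [if_neg hφ.ne, if_pos hφ, abs_of_neg hφ]
    have h1 := h hφ.ne
    rw [abs_of_neg hφ] at h1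
    have h2 : φ - d ≤ 0 := by
      have := neg_abs_le d; have := le_abs_self d; linarith
    rw [abs_of_nonpos h2]; ring
  · simp [hφ]
  · rw [if_neg hφ.ne', if_neg (not_lt.mpr hφ.le), abs_of_pos hφ]
    have h1 := h hφ.ne'
    rw [abs_of_pos hφ] at h1
    have h2 : 0 ≤ φ - d := by
      have := le_abs_self d; linarith
    rw [abs_of_nonneg h2]; ring

private lemma sum_split (N : ℕ) (φ d : Fin N → ℝ) :
    ∑ t, (if φ t = 0 then |d t| else if φ t < 0 then d t else -d t)
      = ((∑ t ∈ univ.filter (fun t => φ t < 0), d t)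
          - ∑ t ∈ univ.filter (fun t => 0 < φ t), d t)
        + ∑ t ∈ univ.filter (fun t => φ t = 0), |d t| := by
  classical
  rw [← Finset.sum_filter_add_sum_filter_not univ (fun t => φ t = 0)]
  have h1 : ∑ t ∈ univ.filter (fun t => φ t = 0),
      (if φ t = 0 then |d t| else if φ t < 0 then d t else -d t)
      = ∑ t ∈ univ.filter (fun t => φ t = 0), |d t| := by
    apply Finset.sum_congr rfl
    intro t ht
    rw [Finset.mem_filter] at ht
    rw [if_pos ht.2]
  have h2 : ∑ t ∈ univ.filter (fun t => ¬ φ t = 0),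
      (if φ t = 0 then |d t| else if φ t < 0 then d t else -d t)
      = ∑ t ∈ univ.filter (fun t => ¬ φ t = 0), (if φ t < 0 then d t else -d t) := by
    apply Finset.sum_congr rfl
    intro t ht
    rw [Finset.mem_filter] at ht
    rw [if_neg ht.2]
  rw [h1, h2]
  rw [← Finset.sum_filter_add_sum_filter_not (univ.filter (fun t => ¬ φ t = 0))
      (fun t => φ t < 0)]
  have h3 : (univ.filter (fun t => ¬ φ t = 0)).filter (fun t => φ t < 0)
      = univ.filter (fun t => φ t < 0) := by
    rw [Finset.filter_filter]
    apply Finset.filter_congr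
    intro t _
    constructor
    · exact fun h => h.2
    · exact fun h => ⟨h.ne, h⟩
  have h4 : (univ.filter (fun t => ¬ φ t = 0)).filter (fun t => ¬ φ t < 0)
      = univ.filter (fun t => 0 < φ t) := by
    rw [Finset.filter_filter]
    apply Finset.filter_congr
    intro t _
    constructor
    · exact fun h => lt_of_le_of_ne (not_lt.mp h.2) (Ne.symm h.1)
    · exact fun h => ⟨h.ne', not_lt.mpr h.le⟩
  have h5 : ∑ t ∈ univ.filter (fun t => φ t < 0), (if φ t < 0 then d t else -d t)
      = ∑ t ∈ univ.filter (fun t => φ t < 0), d t := by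
    apply Finset.sum_congr rfl
    intro t ht
    rw [Finset.mem_filter] at ht
    rw [if_pos ht.2]
  have h6 : ∑ t ∈ univ.filter (fun t => 0 < φ t), (if φ t < 0 then d t else -d t)
      = -∑ t ∈ univ.filter (fun t => 0 < φ t), d t := by
    rw [← Finset.sum_neg_distrib]
    apply Finset.sum_congr rfl
    intro t ht
    rw [Finset.mem_filter] at ht
    rw [if_neg (not_lt.mpr ht.2.le)]
  rw [h3, h4, h5, h6]
  ring

private lemma key_ineq (N : ℕ) (φ d : Fin N → ℝ) :
    (∑ t, |φ t|) + (((∑ t ∈ univ.filter (fun t => φ t < 0), d t)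
          - ∑ t ∈ univ.filter (fun t => 0 < φ t), d t)
        + ∑ t ∈ univ.filter (fun t => φ t = 0), |d t|)
      ≤ ∑ t, |φ t - d t| := by
  rw [← sum_split, ← Finset.sum_add_distrib]
  exact Finset.sum_le_sum (fun t _ => pt_ineq (φ t) (d t))

private lemma key_eq (N : ℕ) (φ d : Fin N → ℝ) (h : ∀ t, φ t ≠ 0 → |d t| ≤ |φ t|) :
    ∑ t, |φ t - d t|
      = (∑ t, |φ t|) + (((∑ t ∈ univ.filter (fun t => φ t < 0), d t)
          - ∑ t ∈ univ.filter (fun t => 0 < φ t), d t)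
        + ∑ t ∈ univ.filter (fun t => φ t = 0), |d t|) := by
  rw [← sum_split, ← Finset.sum_add_distrib]
  exact Finset.sum_congr rfl (fun t _ => pt_eq (φ t) (d t) (h t))

/-- `θ*` is the unique minimizer of the ℓ1 problem iff for every
nonzero `η ∈ ℝ^n`,
`|∑_{t ∈ I⁺(θ*)} ⟨η,x_t⟩ − ∑_{t ∈ I⁻(θ*)} ⟨η,x_t⟩| < ∑_{t ∈ I⁰(θ*)} |⟨η,x_t⟩|`. -/
theorem stmt5 (n N : ℕ) (hn : 1 ≤ n) (hN : 1 ≤ N)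
    (x : Fin N → Fin n → ℝ) (y : Fin N → ℝ) (θs : Fin n → ℝ) :
    (∀ θ : Fin n → ℝ, θ ≠ θs → ∑ t, |y t - x t ⬝ᵥ θs| < ∑ t, |y t - x t ⬝ᵥ θ|) ↔
      (∀ η : Fin n → ℝ, η ≠ 0 →
        |(∑ t ∈ univ.filter (fun t => x t ⬝ᵥ θs > y t), η ⬝ᵥ x t)
          - (∑ t ∈ univ.filter (fun t => x t ⬝ᵥ θs < y t), η ⬝ᵥ x t)|
          < ∑ t ∈ univ.filter (fun t => x t ⬝ᵥ θs = y t), |η ⬝ᵥ x t|) := by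
  classical
  set φ : Fin N → ℝ := fun t => y t - x t ⬝ᵥ θs with hφdef
  have hfp : univ.filter (fun t => x t ⬝ᵥ θs > y t) = univ.filter (fun t => φ t < 0) := by
    apply Finset.filter_congr; intro t _
    simp [hφdef, sub_neg]
  have hfm : univ.filter (fun t => x t ⬝ᵥ θs < y t) = univ.filter (fun t => 0 < φ t) := by
    apply Finset.filter_congr; intro t _
    simp [hφdef, sub_pos]
  have hf0 : univ.filter (fun t => x t ⬝ᵥ θs = y t) = univ.filter (fun t => φ t = 0) := by
    apply Finset.filter_congr; intro t _
    simp [hφdef, sub_eq_zero, eq_comm]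
  rw [hfp, hfm, hf0]
  have hdc : ∀ (η : Fin n → ℝ) (t : Fin N), η ⬝ᵥ x t = x t ⬝ᵥ η := fun η t =>
    dotProduct_comm η (x t)
  constructor
  · -- strict minimizer → condition
    intro hmin η hη
    by_contra hcon
    push_neg at hcon
    -- main: no nonzero direction ζ with A(ζ) + B(ζ) ≤ 0
    have main : ∀ ζ : Fin n → ℝ, ζ ≠ 0 →
        ¬ (((∑ t ∈ univ.filter (fun t => φ t < 0), x t ⬝ᵥ ζ)
            - ∑ t ∈ univ.filter (fun t => 0 < φ t), x t ⬝ᵥ ζ)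
          + (∑ t ∈ univ.filter (fun t => φ t = 0), |x t ⬝ᵥ ζ|) ≤ 0) := by
      intro ζ hζ hAB
      set c : Fin N → ℝ := fun t => x t ⬝ᵥ ζ with hcdef
      have hNe : (univ : Finset (Fin N)).Nonempty := ⟨⟨0, hN⟩, Finset.mem_univ _⟩
      set S : ℝ := univ.inf' hNe (fun t => if φ t = 0 then 1 else |φ t| / (|c t| + 1))
        with hSdef
      have hSpos : 0 < S := by
        rw [hSdef, Finset.lt_inf'_iff]
        intro t _
        by_cases h : φ t = 0
        · simp [h]
        · rw [if_neg h]
          exact div_pos (abs_pos.mpr h) (by positivity)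
      have hSle : ∀ t, φ t ≠ 0 → S * |c t| ≤ |φ t| := by
        intro t ht
        have h1 : S ≤ |φ t| / (|c t| + 1) := by
          have := Finset.inf'_le
            (fun t => if φ t = 0 then 1 else |φ t| / (|c t| + 1))
            (Finset.mem_univ t)
          rwa [if_neg ht] at this
        have h2 : 0 < |c t| + 1 := by positivity
        have h3 : S * (|c t| + 1) ≤ |φ t| := by
          rw [← le_div_iff₀ h2]; exact h1
        nlinarith [abs_nonneg (c t), hSpos.le]
      set θ : Fin n → ℝ := θs + S • ζ with hθdef
      have hθne : θ ≠ θs := by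
        intro h
        apply hζ
        have : S • ζ = 0 := by
          have := congrArg (fun v => v - θs) h
          simpa [hθdef] using this
        rcases smul_eq_zero.mp this with h' | h'
        · exact absurd h' hSpos.ne'
        · exact h'
      have hval : ∀ t, y t - x t ⬝ᵥ θ = φ t - S * c t := by
        intro t
        simp [hθdef, hφdef, hcdef, dotProduct_add, dotProduct_smul, smul_eq_mul]
        ring
      have heq : ∑ t, |y t - x t ⬝ᵥ θ|
          = (∑ t, |φ t|) + (((∑ t ∈ univ.filter (fun t => φ t < 0), S * c t)
              - ∑ t ∈ univ.filter (fun t => 0 < φ t), S * c t)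
            + ∑ t ∈ univ.filter (fun t => φ t = 0), |S * c t|) := by
        have := key_eq N φ (fun t => S * c t) (by
          intro t ht
          rw [abs_mul, abs_of_pos hSpos]
          exact hSle t ht)
        simpa [hval] using this
      have habs : ∀ t, |S * c t| = S * |c t| := fun t => by
        rw [abs_mul, abs_of_pos hSpos]
      rw [← Finset.mul_sum, ← Finset.mul_sum] at heq
      have heq2 : ∑ t, |y t - x t ⬝ᵥ θ|
          = (∑ t, |φ t|) + S * (((∑ t ∈ univ.filter (fun t => φ t < 0), c t)
              - ∑ t ∈ univ.filter (fun t => 0 < φ t), c t)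
            + ∑ t ∈ univ.filter (fun t => φ t = 0), |c t|) := by
        rw [heq]
        simp only [habs]
        rw [← Finset.mul_sum]
        ring
      have hlt := hmin θ hθne
      have hle : S * (((∑ t ∈ univ.filter (fun t => φ t < 0), c t)
              - ∑ t ∈ univ.filter (fun t => 0 < φ t), c t)
            + ∑ t ∈ univ.filter (fun t => φ t = 0), |c t|) ≤ 0 :=
        mul_nonpos_of_nonneg_of_nonpos hSpos.le hAB
      rw [hφdef] at heq2
      linarith [heq2 ▸ hlt]
    -- use main with η or -η
    set A : ℝ := (∑ t ∈ univ.filter (fun t => φ t < 0), η ⬝ᵥ x t)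
        - ∑ t ∈ univ.filter (fun t => 0 < φ t), η ⬝ᵥ x t with hAdef
    set B : ℝ := ∑ t ∈ univ.filter (fun t => φ t = 0), |η ⬝ᵥ x t| with hBdef
    have hBA : B ≤ |A| := hcon
    rcases le_or_gt A 0 with hA | hA
    · apply main η hη
      have : |A| = -A := abs_of_nonpos hA
      have hAB : A + B ≤ 0 := by
        rw [this] at hBA; linarith
      calc ((∑ t ∈ univ.filter (fun t => φ t < 0), x t ⬝ᵥ η)
            - ∑ t ∈ univ.filter (fun t => 0 < φ t), x t ⬝ᵥ η)
          + (∑ t ∈ univ.filter (fun t => φ t = 0), |x t ⬝ᵥ η|)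
          = A + B := by
            rw [hAdef, hBdef]
            simp only [hdc η]
        _ ≤ 0 := hAB
    · apply main (-η) (by simpa using hη)
      have : |A| = A := abs_of_pos hA
      have hAB : -A + B ≤ 0 := by rw [this] at hBA; linarith
      have hnegdot : ∀ t, x t ⬝ᵥ (-η) = -(x t ⬝ᵥ η) := fun t => by
        simp [dotProduct_neg]
      calc ((∑ t ∈ univ.filter (fun t => φ t < 0), x t ⬝ᵥ (-η))
            - ∑ t ∈ univ.filter (fun t => 0 < φ t), x t ⬝ᵥ (-η))
          + (∑ t ∈ univ.filter (fun t => φ t = 0), |x t ⬝ᵥ (-η)|)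
          = -A + B := by
            rw [hAdef, hBdef]
            simp only [hnegdot, Finset.sum_neg_distrib, abs_neg, hdc η]
            ring
        _ ≤ 0 := hAB
  · -- condition → strict minimizer
    intro hcond θ hθ
    have hη : θ - θs ≠ 0 := sub_ne_zero.mpr hθ
    have h := hcond (θ - θs) hη
    set d : Fin N → ℝ := fun t => x t ⬝ᵥ θ - x t ⬝ᵥ θs with hddef
    have hdη : ∀ t, (θ - θs) ⬝ᵥ x t = d t := by
      intro t
      rw [dotProduct_comm, dotProduct_sub]
    simp only [hdη] at h
    have hval : ∀ t, y t - x t ⬝ᵥ θ = φ t - d t := by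
      intro t; simp only [hφdef, hddef]; ring
    have hineq := key_ineq N φ d
    set A : ℝ := (∑ t ∈ univ.filter (fun t => φ t < 0), d t)
        - ∑ t ∈ univ.filter (fun t => 0 < φ t), d t with hAdef
    set B : ℝ := ∑ t ∈ univ.filter (fun t => φ t = 0), |d t| with hBdef
    have hAB : 0 < A + B := by
      have h1 : -|A| ≤ A := neg_abs_le A
      have h2 : |A| < B := h
      linarith
    calc ∑ t, |y t - x t ⬝ᵥ θs| = ∑ t, |φ t| := by simp [hφdef]
      _ < (∑ t, |φ t|) + (A + B) := by linarith
      _ ≤ ∑ t, |φ t - d t| := by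
          exact hineq
      _ = ∑ t, |y t - x t ⬝ᵥ θ| := by
          apply Finset.sum_congr rfl
          intro t _
          rw [hval t]
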